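/- Let p, q, N be real numbers with 0 < q < 2 < p and 2 < N < 2(p−q)/(p−2). Let (X,d) be a metric space, μ a Borel measure on X, x₀ ∈ X and k > 0, and suppose μ(B_ρ(x₀)) = k ω_N ρ^N for all ρ > 0. Then for every λ > 0 the equality ((2−q)/(p−2)) ∫_X (λ + d(x₀,x)^{2−q})^{(2p−2)/(2−p)} d(x₀,x)^{2−2q} dμ = ((N−q)/p) ∫_X (λ + d(x₀,x)^{2−q})^{p/(2−p)} d(x₀,x)^{−q} dμ holds; i.e. the functions (λ + d_{x₀}^{2−q})^{1/(2−p)} realize equality in the integral form of the Caffarelli–Kohn–Nirenberg inequality on a volume cone. -/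

import Mathlib

open MeasureTheory Set Filter Topology
open scoped NNReal ENNReal

/-- `ω_N = π^{N/2} / Γ(N/2 + 1)`, the volume of the unit ball in dimension `N`. -/
noncomputable def omegaN (N : ℝ) : ℝ := Real.pi ^ (N / 2) / Real.Gamma (N / 2 + 1)

lemma meas_aux (l a e s : ℝ) : Measurable (fun r : ℝ => (l + r ^ a) ^ e * r ^ s) := by
  fun_prop

lemma integrableOn_aux {a l e s : ℝ} (ha : 0 < a) (hl : 0 < l) (he : e ≤ 0)
    (hs : -1 < s) (hse : s + a * e < -1) :
    IntegrableOn (fun r : ℝ => (l + r ^ a) ^ e * r ^ s) (Ioi 0) := by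
  have hmeas := meas_aux l a e s
  have h1 : IntegrableOn (fun r : ℝ => (l + r ^ a) ^ e * r ^ s) (Ioc 0 1) := by
    have hdom : IntegrableOn (fun r : ℝ => l ^ e * r ^ s) (Ioc 0 1) := by
      have := (intervalIntegral.intervalIntegrable_rpow' (a := 0) (b := 1) hs).const_mul (l ^ e)
      rwa [intervalIntegrable_iff, uIoc_of_le zero_le_one] at this
    refine hdom.mono' hmeas.aestronglyMeasurable ?_
    filter_upwards [ae_restrict_mem measurableSet_Ioc] with r hr
    have hr0 : (0:ℝ) < r := hr.1
    have h1 : (0:ℝ) < l + r ^ a := by positivity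
    rw [Real.norm_eq_abs, abs_of_nonneg (by positivity)]
    have : (l + r ^ a) ^ e ≤ l ^ e := by
      apply Real.rpow_le_rpow_of_nonpos hl (by nlinarith [Real.rpow_pos_of_pos hr0 a]) he
    exact mul_le_mul_of_nonneg_right this (Real.rpow_nonneg hr0.le s)
  have h2 : IntegrableOn (fun r : ℝ => (l + r ^ a) ^ e * r ^ s) (Ioi 1) := by
    have hdom : IntegrableOn (fun r : ℝ => r ^ (a * e + s)) (Ioi 1) :=
      integrableOn_Ioi_rpow_of_lt (by linarith) one_pos
    refine hdom.mono' hmeas.aestronglyMeasurable ?_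
    filter_upwards [ae_restrict_mem measurableSet_Ioi] with r hr
    have hr0 : (0:ℝ) < r := lt_trans one_pos hr
    have hra : (0:ℝ) < r ^ a := Real.rpow_pos_of_pos hr0 a
    rw [Real.norm_eq_abs, abs_of_nonneg (by positivity), Real.rpow_add hr0]
    have : (l + r ^ a) ^ e ≤ (r ^ a) ^ e :=
      Real.rpow_le_rpow_of_nonpos hra (by linarith) he
    rw [← Real.rpow_mul hr0.le] at this
    exact mul_le_mul_of_nonneg_right this (Real.rpow_nonneg hr0.le s)
  have := h1.union h2
  rwa [Ioc_union_Ioi_eq_Ioi zero_le_one] at this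

lemma oneD_identity {a b m lam : ℝ} (ha : 0 < a) (hb : b < 0) (hm : 0 < m) (hlam : 0 < lam)
    (hconv : m + a * b < 0) :
    m * ∫ r in Ioi (0:ℝ), (lam + r ^ a) ^ b * r ^ (m - 1) =
      (a * (-b)) * ∫ r in Ioi (0:ℝ), (lam + r ^ a) ^ (b - 1) * r ^ (a - 1 + m) := by
  have hA : IntegrableOn (fun r : ℝ => (lam + r ^ a) ^ b * r ^ (m - 1)) (Ioi 0) :=
    integrableOn_aux ha hlam hb.le (by linarith) (by nlinarith)
  have hB : IntegrableOn (fun r : ℝ => (lam + r ^ a) ^ (b - 1) * r ^ (a - 1 + m)) (Ioi 0) :=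
    integrableOn_aux ha hlam (by linarith) (by nlinarith) (by nlinarith)
  set G : ℝ → ℝ := fun r => (lam + r ^ a) ^ b * r ^ m with hG
  set g : ℝ → ℝ := fun r =>
    a * b * ((lam + r ^ a) ^ (b - 1) * r ^ (a - 1 + m)) +
      m * ((lam + r ^ a) ^ b * r ^ (m - 1)) with hg
  have hG0 : G 0 = 0 := by
    simp [hG, Real.zero_rpow ha.ne', Real.zero_rpow hm.ne']
  have hcont : ContinuousWithinAt G (Ici 0) 0 := by
    apply ContinuousAt.continuousWithinAt
    have h1 : ContinuousAt (fun r : ℝ => r ^ a) 0 :=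
      Real.continuousAt_rpow_const 0 a (Or.inr ha.le)
    have h2 : ContinuousAt (fun r : ℝ => lam + r ^ a) 0 := continuousAt_const.add h1
    have h3 : ContinuousAt (fun r : ℝ => (lam + r ^ a) ^ b) 0 := by
      apply h2.rpow_const
      left
      simp [Real.zero_rpow ha.ne']
      exact hlam.ne'
    exact h3.mul (Real.continuousAt_rpow_const 0 m (Or.inr hm.le))
  have hderiv : ∀ r ∈ Ioi (0:ℝ), HasDerivAt G (g r) r := by
    intro r hr
    have hr0 : (0:ℝ) < r := hr
    have hpos : (0:ℝ) < lam + r ^ a := by positivity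
    have hd1 : HasDerivAt (fun x : ℝ => x ^ a) (a * r ^ (a - 1)) r :=
      Real.hasDerivAt_rpow_const (Or.inl hr0.ne')
    have hd2 : HasDerivAt (fun x : ℝ => lam + x ^ a) (a * r ^ (a - 1)) r := hd1.const_add lam
    have hd3 : HasDerivAt (fun y : ℝ => y ^ b) (b * (lam + r ^ a) ^ (b - 1)) (lam + r ^ a) :=
      Real.hasDerivAt_rpow_const (Or.inl hpos.ne')
    have hd4 := hd3.comp r hd2
    have hd5 : HasDerivAt (fun x : ℝ => x ^ m) (m * r ^ (m - 1)) r :=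
      Real.hasDerivAt_rpow_const (Or.inl hr0.ne')
    have hd6 := hd4.mul hd5
    refine hd6.congr_deriv ?_
    simp only [hg, Function.comp_apply]
    rw [Real.rpow_add hr0]
    ring
  have hint : IntegrableOn g (Ioi (0:ℝ)) := (hB.const_mul _).add (hA.const_mul _)
  have htop : Tendsto G atTop (𝓝 0) := by
    have hexp : a * b + m < 0 := by linarith
    have htends : Tendsto (fun r : ℝ => r ^ (a * b + m)) atTop (𝓝 0) := by
      have := tendsto_rpow_neg_atTop (y := -(a * b + m)) (by linarith)
      simpa using this
    apply squeeze_zero' ?_ ?_ htends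
    · filter_upwards [eventually_ge_atTop (1:ℝ)] with r hr
      have hr0 : (0:ℝ) < r := lt_of_lt_of_le one_pos hr
      have : (0:ℝ) < lam + r ^ a := by positivity
      simp only [hG]
      positivity
    · filter_upwards [eventually_ge_atTop (1:ℝ)] with r hr
      have hr0 : (0:ℝ) < r := lt_of_lt_of_le one_pos hr
      have hra : (0:ℝ) < r ^ a := Real.rpow_pos_of_pos hr0 a
      have hle : (lam + r ^ a) ^ b ≤ (r ^ a) ^ b :=
        Real.rpow_le_rpow_of_nonpos hra (by linarith) hb.le
      rw [← Real.rpow_mul hr0.le] at hle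
      simp only [hG]
      rw [Real.rpow_add hr0]
      exact mul_le_mul_of_nonneg_right hle (Real.rpow_nonneg hr0.le m)
  have key : ∫ r in Ioi (0:ℝ), g r = 0 - G 0 :=
    MeasureTheory.integral_Ioi_of_hasDerivAt_of_tendsto hcont hderiv hint htop
  rw [hG0, sub_zero] at key
  have hsplit : ∫ r in Ioi (0:ℝ), g r =
      a * b * (∫ r in Ioi (0:ℝ), (lam + r ^ a) ^ (b - 1) * r ^ (a - 1 + m)) +
        m * (∫ r in Ioi (0:ℝ), (lam + r ^ a) ^ b * r ^ (m - 1)) := by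
    simp only [hg]
    rw [integral_add (hB.const_mul _) (hA.const_mul _), integral_const_mul, integral_const_mul]
  rw [hsplit] at key
  linarith [key]

lemma map_dist_measure {X : Type*} [MetricSpace X] [MeasurableSpace X] [BorelSpace X]
    (μ : Measure X) (x₀ : X) (C N : ℝ) (hN : 0 < N) (hC : 0 ≤ C)
    (hcone : ∀ ρ > (0:ℝ), μ (Metric.ball x₀ ρ) = ENNReal.ofReal (C * ρ ^ N)) :
    μ.map (fun x => dist x₀ x) =
      (volume.restrict (Ioi 0)).withDensity
        (fun r => ENNReal.ofReal (C * N * r ^ (N - 1))) := by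
  have hmap : Measurable (fun x : X => dist x₀ x) :=
    (continuous_const.dist continuous_id).measurable
  have hIio1 : ∀ ρ : ℝ, (μ.map (fun x => dist x₀ x)) (Iio ρ) =
      ENNReal.ofReal (C * (max ρ 0) ^ N) := by
    intro ρ
    rw [Measure.map_apply hmap measurableSet_Iio]
    have hpre : (fun x => dist x₀ x) ⁻¹' Iio ρ = Metric.ball x₀ ρ := by
      ext x; simp [Metric.mem_ball, dist_comm]
    rw [hpre]
    rcases le_or_gt ρ 0 with h | h
    · rw [Metric.ball_eq_empty.2 h, measure_empty, max_eq_right h,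
        Real.zero_rpow hN.ne', mul_zero, ENNReal.ofReal_zero]
    · rw [hcone ρ h, max_eq_left h.le]
  have hIio2 : ∀ ρ : ℝ, ((volume.restrict (Ioi 0)).withDensity
      (fun r => ENNReal.ofReal (C * N * r ^ (N - 1)))) (Iio ρ) =
      ENNReal.ofReal (C * (max ρ 0) ^ N) := by
    intro ρ
    rw [withDensity_apply _ measurableSet_Iio, Measure.restrict_restrict measurableSet_Iio,
      Set.Iio_inter_Ioi]
    rcases le_or_gt ρ 0 with h | h
    · rw [Set.Ioo_eq_empty (by simpa using h), Measure.restrict_empty, lintegral_zero_measure,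
        max_eq_right h, Real.zero_rpow hN.ne', mul_zero, ENNReal.ofReal_zero]
    · rw [max_eq_left h.le]
      have hint : IntegrableOn (fun r : ℝ => C * N * r ^ (N - 1)) (Ioo 0 ρ) := by
        have := (intervalIntegral.intervalIntegrable_rpow' (a := 0) (b := ρ)
          (by linarith : (-1:ℝ) < N - 1)).const_mul (C * N)
        rw [intervalIntegrable_iff, uIoc_of_le h.le] at this
        exact this.mono_set Set.Ioo_subset_Ioc_self
      have hnn : 0 ≤ᵐ[volume.restrict (Ioo 0 ρ)] fun r : ℝ => C * N * r ^ (N - 1) := by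
        refine (ae_restrict_iff' measurableSet_Ioo).2 ?_
        filter_upwards with r hr
        have := Real.rpow_nonneg hr.1.le (N - 1)
        positivity
      rw [← ofReal_integral_eq_lintegral_ofReal hint hnn]
      congr 1
      rw [MeasureTheory.integral_const_mul, ← MeasureTheory.integral_Ioc_eq_integral_Ioo,
        ← intervalIntegral.integral_of_le h.le,
        integral_rpow (Or.inl (by linarith : (-1:ℝ) < N - 1))]
      have hN1 : N - 1 + 1 = N := by ring
      rw [hN1, Real.zero_rpow hN.ne']
      field_simp
      ring
  refine Measure.ext_of_Ico' _ _ (fun a b hab => ?_) (fun a b hab => ?_)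
  · exact ((measure_mono (Set.Ico_subset_Iio_self)).trans_lt
      (by rw [hIio1]; exact ENNReal.ofReal_lt_top)).ne
  · have hdiff : Ico a b = Iio b \ Iio a := by ext x; simp [and_comm]
    rw [hdiff,
      measure_diff (Set.Iio_subset_Iio hab.le) measurableSet_Iio.nullMeasurableSet
        (by rw [hIio1]; exact ENNReal.ofReal_ne_top),
      measure_diff (Set.Iio_subset_Iio hab.le) measurableSet_Iio.nullMeasurableSet
        (by rw [hIio2]; exact ENNReal.ofReal_ne_top),
      hIio1, hIio1, hIio2, hIio2]

/-- On an `N`-volume cone at `x₀` with density `k`, the functions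
`(λ + d_{x₀}^{2-q})^{1/(2-p)}` realize equality in the integral form of the
Caffarelli–Kohn–Nirenberg inequality. -/
theorem ckn_equality_on_volume_cone (p q N : ℝ)
    (hq : 0 < q) (hq2 : q < 2) (hp : 2 < p)
    (hN1 : 2 < N) (hN2 : N < 2 * (p - q) / (p - 2))
    {X : Type*} [MetricSpace X] [MeasurableSpace X] [BorelSpace X]
    (μ : Measure X) (x₀ : X) (k : ℝ) (hk : 0 < k)
    (hcone : ∀ ρ > (0:ℝ), μ (Metric.ball x₀ ρ) = ENNReal.ofReal (k * omegaN N * ρ ^ N))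
    (lam : ℝ) (hlam : 0 < lam) :
    ((2 - q) / (p - 2)) *
        ∫ x, (lam + dist x₀ x ^ (2 - q)) ^ ((2 * p - 2) / (2 - p)) *
          dist x₀ x ^ (2 - 2 * q) ∂μ =
      ((N - q) / p) *
        ∫ x, (lam + dist x₀ x ^ (2 - q)) ^ (p / (2 - p)) * dist x₀ x ^ (-q) ∂μ := by
  have hω : 0 < omegaN N :=
    div_pos (Real.rpow_pos_of_pos Real.pi_pos _) (Real.Gamma_pos_of_pos (by linarith))
  have hC : (0:ℝ) ≤ k * omegaN N := by positivity
  have hmap : Measurable (fun x : X => dist x₀ x) :=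
    (continuous_const.dist continuous_id).measurable
  have hmeq := map_dist_measure μ x₀ (k * omegaN N) N (by linarith) hC hcone
  set c : ℝ := k * omegaN N * N with hcdef
  have hc : 0 < c := by positivity
  -- generic transfer of radial integrals
  have transfer : ∀ f : ℝ → ℝ, Measurable f →
      ∫ x, f (dist x₀ x) ∂μ = ∫ r in Ioi (0:ℝ), (c * r ^ (N - 1)) * f r := by
    intro f hf
    rw [← integral_map hmap.aemeasurable hf.aestronglyMeasurable, hmeq]
    have hd : (fun r : ℝ => ENNReal.ofReal (c * r ^ (N - 1))) =
        fun r => ((Real.toNNReal (c * r ^ (N - 1)) : ℝ≥0) : ℝ≥0∞) := rfl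
    have hmw : Measurable (fun r : ℝ => Real.toNNReal (c * r ^ (N - 1))) := by
      fun_prop
    rw [hd, integral_withDensity_eq_integral_smul hmw f]
    refine setIntegral_congr_fun measurableSet_Ioi ?_
    intro r hr
    have hr0 : (0:ℝ) < r := hr
    have hnn : (0:ℝ) ≤ c * r ^ (N - 1) := by
      have := Real.rpow_nonneg hr0.le (N - 1); positivity
    simp [NNReal.smul_def, Real.coe_toNNReal _ hnn]
  have hfB : Measurable (fun r : ℝ =>
      (lam + r ^ (2 - q)) ^ ((2 * p - 2) / (2 - p)) * r ^ (2 - 2 * q)) := by fun_prop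
  have hfA : Measurable (fun r : ℝ =>
      (lam + r ^ (2 - q)) ^ (p / (2 - p)) * r ^ (-q)) := by fun_prop
  have hB := transfer _ hfB
  have hA := transfer _ hfA
  have h2p : (2:ℝ) - p ≠ 0 := by linarith
  have hbexp : (2 * p - 2) / (2 - p) = p / (2 - p) - 1 := by field_simp; ring
  have hB2 : ∫ r in Ioi (0:ℝ), (c * r ^ (N - 1)) *
      ((lam + r ^ (2 - q)) ^ ((2 * p - 2) / (2 - p)) * r ^ (2 - 2 * q)) =
      c * ∫ r in Ioi (0:ℝ),
        (lam + r ^ (2 - q)) ^ (p / (2 - p) - 1) * r ^ (2 - q - 1 + (N - q)) := by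
    rw [← integral_const_mul]
    refine setIntegral_congr_fun measurableSet_Ioi ?_
    intro r hr
    have hr0 : (0:ℝ) < r := hr
    dsimp only
    rw [hbexp, show (2:ℝ) - q - 1 + (N - q) = (2 - 2 * q) + (N - 1) by ring,
      Real.rpow_add hr0]
    ring
  have hA2 : ∫ r in Ioi (0:ℝ), (c * r ^ (N - 1)) *
      ((lam + r ^ (2 - q)) ^ (p / (2 - p)) * r ^ (-q)) =
      c * ∫ r in Ioi (0:ℝ),
        (lam + r ^ (2 - q)) ^ (p / (2 - p)) * r ^ (N - q - 1) := by
    rw [← integral_const_mul]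
    refine setIntegral_congr_fun measurableSet_Ioi ?_
    intro r hr
    have hr0 : (0:ℝ) < r := hr
    dsimp only
    rw [show N - q - 1 = (-q) + (N - 1) by ring, Real.rpow_add hr0]
    ring
  have hconv : (N - q) + (2 - q) * (p / (2 - p)) < 0 := by
    have h1 : N * (p - 2) < 2 * (p - q) := (lt_div_iff₀ (by linarith)).1 hN2
    have h2 : (N - q) + (2 - q) * (p / (2 - p)) =
        ((N - q) * (2 - p) + (2 - q) * p) / (2 - p) := by
      field_simp
    rw [h2]
    apply div_neg_of_pos_of_neg
    · nlinarith
    · linarith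
  have hkey := oneD_identity (a := 2 - q) (b := p / (2 - p)) (m := N - q) (lam := lam)
    (by linarith) (div_neg_of_pos_of_neg (by linarith) (by linarith)) (by linarith) hlam hconv
  rw [hB, hA, hB2, hA2]
  have hnb : -(p / (2 - p)) = p / (p - 2) := by
    rw [show (2:ℝ) - p = -(p - 2) by ring, div_neg, neg_neg]
  rw [hnb] at hkey
  have hp0 : p ≠ 0 := by linarith
  have hp2 : p - 2 ≠ 0 := by linarith
  set JB := ∫ r in Ioi (0:ℝ),
    (lam + r ^ (2 - q)) ^ (p / (2 - p) - 1) * r ^ (2 - q - 1 + (N - q)) with hJB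
  set JA := ∫ r in Ioi (0:ℝ),
    (lam + r ^ (2 - q)) ^ (p / (2 - p)) * r ^ (N - q - 1) with hJA
  field_simp at hkey ⊢
  linarith [mul_le_mul_of_nonneg_left (le_of_eq hkey) hc.le,
    mul_le_mul_of_nonneg_left (ge_of_eq hkey) hc.le]
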